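/- For every integer k ≥ 1 and every β ∈ (0,1], there exists a chore instance with 2 agents having identical binary supermodular costs (on 2k+1 chores) in which no complete allocation is both Pareto efficient and β-EFkX. Specifically, with one chore of unit marginal cost and k complementary pairs (cost 1 only when both chores of a pair are held), every Pareto efficient allocation has cost profile (0,1) or (1,0), and the agent with cost 1 retains cost 1 after removing any k chores while the other agent has cost 0. -/

import Mathlib

/-- Binary marginals for a nonnegative-integer-valued cost function on sets of chores
(chores indexed by natural numbers). -/
def BinaryMarginals (c : Finset ℕ → ℕ) : Prop :=
  ∀ (S : Finset ℕ) (a : ℕ), a ∉ S →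
    c (insert a S) = c S ∨ c (insert a S) = c S + 1

/-- Supermodularity (increasing marginals), in addition form. -/
def Supermod (c : Finset ℕ → ℕ) : Prop :=
  ∀ (S T : Finset ℕ) (a : ℕ), S ⊆ T → a ∉ T →
    c (insert a S) + c T ≤ c (insert a T) + c S

/-- The chores are `0, 1, …, 2k`; chore `2k` always has marginal cost `1`, and for each
`j < k` the pair `{2j, 2j+1}` are complements: a cost of `1` is incurred exactly when
both chores of the pair are held. -/
def pairCost (k : ℕ) (S : Finset ℕ) : ℕ :=
  (if 2 * k ∈ S then 1 else 0) +
    ((Finset.range k).filter fun j => 2 * j ∈ S ∧ 2 * j + 1 ∈ S).card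

/-- A complete allocation of the `2k+1` chores between the two agents. -/
def IsAlloc (k : ℕ) (A : Fin 2 → Finset ℕ) : Prop :=
  Disjoint (A 0) (A 1) ∧ A 0 ∪ A 1 = Finset.range (2 * k + 1)

/-- Pareto efficiency for two agents with the identical cost `pairCost k`. -/
def ParetoEff (k : ℕ) (A : Fin 2 → Finset ℕ) : Prop :=
  ¬ ∃ B : Fin 2 → Finset ℕ, IsAlloc k B ∧
    (∀ i, pairCost k (B i) ≤ pairCost k (A i)) ∧
    (∃ i, pairCost k (B i) < pairCost k (A i))

/-- `β`-EFkX: for every envying pair and every removal of `k` chores from the envying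
agent's bundle, a `β`-fraction of the remaining cost is at most the cost of the other
agent's bundle. -/
def BetaEFkX (β : ℝ) (k : ℕ) (A : Fin 2 → Finset ℕ) : Prop :=
  ∀ i j : Fin 2, k ≤ (A i).card → ∀ T ⊆ A i, T.card = k →
    β * (pairCost k (A i \ T) : ℝ) ≤ (pairCost k (A j) : ℝ)

namespace EFkXAux

/-- The marginal cost of adding chore `a` to set `S`. -/
def marg (k a : ℕ) (S : Finset ℕ) : ℕ :=
  (if a = 2 * k then 1 else 0) +
    (if ∃ j, j < k ∧ ((a = 2 * j ∧ 2 * j + 1 ∈ S) ∨ (a = 2 * j + 1 ∧ 2 * j ∈ S))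
      then 1 else 0)

lemma pairCost_eq (k : ℕ) (S : Finset ℕ) :
    pairCost k S = (if 2 * k ∈ S then 1 else 0) +
      ∑ j ∈ Finset.range k, (if 2 * j ∈ S ∧ 2 * j + 1 ∈ S then 1 else 0) := by
  rw [pairCost, Finset.card_filter]

lemma marg_le_one (k a : ℕ) (S : Finset ℕ) : marg k a S ≤ 1 := by
  unfold marg
  by_cases h : a = 2 * k
  · have hne : ¬ ∃ j, j < k ∧ ((a = 2 * j ∧ 2 * j + 1 ∈ S) ∨ (a = 2 * j + 1 ∧ 2 * j ∈ S)) := by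
      rintro ⟨j, hj, ⟨e, _⟩ | ⟨e, _⟩⟩ <;> omega
    rw [if_pos h, if_neg hne]
  · simp only [if_neg h, Nat.zero_add]
    split <;> omega

lemma pairCost_insert (k a : ℕ) (S : Finset ℕ) (ha : a ∉ S) :
    pairCost k (insert a S) = pairCost k S + marg k a S := by
  rw [pairCost_eq, pairCost_eq, marg]
  have h2k : (if 2 * k ∈ insert a S then 1 else 0) =
      (if 2 * k ∈ S then 1 else 0) + (if a = 2 * k then 1 else 0) := by
    by_cases h : a = 2 * k <;> by_cases h2 : 2 * k ∈ S <;>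
      simp_all [Finset.mem_insert] <;> omega
  have hsum : (∑ j ∈ Finset.range k,
        (if 2 * j ∈ insert a S ∧ 2 * j + 1 ∈ insert a S then 1 else 0)) =
      (∑ j ∈ Finset.range k, (if 2 * j ∈ S ∧ 2 * j + 1 ∈ S then 1 else 0)) +
      (if ∃ j, j < k ∧ ((a = 2 * j ∧ 2 * j + 1 ∈ S) ∨ (a = 2 * j + 1 ∧ 2 * j ∈ S))
        then 1 else 0) := by
    by_cases hex : ∃ j, j < k ∧ ((a = 2 * j ∧ 2 * j + 1 ∈ S) ∨ (a = 2 * j + 1 ∧ 2 * j ∈ S))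
    · obtain ⟨j0, hj0k, hj0⟩ := hex
      rw [if_pos ⟨j0, hj0k, hj0⟩]
      have hmem : j0 ∈ Finset.range k := Finset.mem_range.mpr hj0k
      rw [← Finset.add_sum_erase _ _ hmem, ← Finset.add_sum_erase _ _ hmem]
      have h1 : (if 2 * j0 ∈ insert a S ∧ 2 * j0 + 1 ∈ insert a S then 1 else 0) = 1 := by
        rw [if_pos]
        rcases hj0 with ⟨e, h'⟩ | ⟨e, h'⟩
        · exact ⟨e ▸ Finset.mem_insert_self _ _, Finset.mem_insert_of_mem h'⟩
        · exact ⟨Finset.mem_insert_of_mem h', e ▸ Finset.mem_insert_self _ _⟩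
      have h2 : (if 2 * j0 ∈ S ∧ 2 * j0 + 1 ∈ S then 1 else 0) = 0 := by
        rw [if_neg]
        rintro ⟨h, h'⟩
        rcases hj0 with ⟨e, _⟩ | ⟨e, _⟩
        · exact ha (e ▸ h)
        · exact ha (e ▸ h')
      have h3 : ∀ j ∈ (Finset.range k).erase j0,
          (if 2 * j ∈ insert a S ∧ 2 * j + 1 ∈ insert a S then 1 else 0) =
          (if 2 * j ∈ S ∧ 2 * j + 1 ∈ S then 1 else 0) := by
        intro j hj
        have hne : j ≠ j0 := (Finset.mem_erase.mp hj).1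
        have e1 : (2 * j ∈ insert a S) ↔ (2 * j ∈ S) := by
          simp only [Finset.mem_insert]
          constructor
          · rintro (h | h)
            · exfalso; rcases hj0 with ⟨e, _⟩ | ⟨e, _⟩ <;> omega
            · exact h
          · exact Or.inr
        have e2 : (2 * j + 1 ∈ insert a S) ↔ (2 * j + 1 ∈ S) := by
          simp only [Finset.mem_insert]
          constructor
          · rintro (h | h)
            · exfalso; rcases hj0 with ⟨e, _⟩ | ⟨e, _⟩ <;> omega
            · exact h
          · exact Or.inr
        simp only [e1, e2]
      rw [Finset.sum_congr rfl h3, h1, h2]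
      omega
    · rw [if_neg hex, Nat.add_zero]
      apply Finset.sum_congr rfl
      intro j hj
      have hjk := Finset.mem_range.mp hj
      have e : (2 * j ∈ insert a S ∧ 2 * j + 1 ∈ insert a S) ↔ (2 * j ∈ S ∧ 2 * j + 1 ∈ S) := by
        simp only [Finset.mem_insert]
        constructor
        · rintro ⟨h1 | h1, h2 | h2⟩
          · omega
          · exact absurd ⟨j, hjk, Or.inl ⟨h1.symm, h2⟩⟩ hex
          · exact absurd ⟨j, hjk, Or.inr ⟨h2.symm, h1⟩⟩ hex
          · exact ⟨h1, h2⟩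
        · rintro ⟨h1, h2⟩; exact ⟨Or.inr h1, Or.inr h2⟩
      simp only [e]
  rw [h2k, hsum]
  ring

lemma marg_mono (k a : ℕ) {S T : Finset ℕ} (hST : S ⊆ T) : marg k a S ≤ marg k a T := by
  unfold marg
  apply Nat.add_le_add_left
  split_ifs with h1 h2
  · exact le_rfl
  · exfalso
    obtain ⟨j, hj, ⟨e, h⟩ | ⟨e, h⟩⟩ := h1
    · exact h2 ⟨j, hj, Or.inl ⟨e, hST h⟩⟩
    · exact h2 ⟨j, hj, Or.inr ⟨e, hST h⟩⟩
  all_goals omega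

lemma binaryMarginals_pairCost (k : ℕ) : BinaryMarginals (pairCost k) := by
  intro S a ha
  rw [pairCost_insert k a S ha]
  have := marg_le_one k a S
  omega

lemma supermod_pairCost (k : ℕ) : Supermod (pairCost k) := by
  intro S T a hST haT
  have haS : a ∉ S := fun h => haT (hST h)
  rw [pairCost_insert k a S haS, pairCost_insert k a T haT]
  have := marg_mono k a hST
  omega

/-- The set of even chores `0, 2, …, 2k-2`. -/
def Ev (k : ℕ) : Finset ℕ := (Finset.range k).image (fun j => 2 * j)

lemma mem_Ev {k x : ℕ} : x ∈ Ev k ↔ ∃ j, j < k ∧ 2 * j = x := by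
  simp [Ev]

lemma Ev_subset (k : ℕ) : Ev k ⊆ Finset.range (2 * k + 1) := by
  intro x hx
  obtain ⟨j, hj, rfl⟩ := mem_Ev.mp hx
  exact Finset.mem_range.mpr (by omega)

lemma pairCost_Ev (k : ℕ) : pairCost k (Ev k) = 0 := by
  rw [pairCost_eq]
  have h1 : 2 * k ∉ Ev k := by
    rw [mem_Ev]; rintro ⟨j, hj, e⟩; omega
  have hz : (∑ j ∈ Finset.range k, (if 2 * j ∈ Ev k ∧ 2 * j + 1 ∈ Ev k then 1 else 0)) = 0 := by
    apply Finset.sum_eq_zero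
    intro j hj
    rw [if_neg]
    rintro ⟨_, h⟩
    obtain ⟨j', _, e⟩ := mem_Ev.mp h
    omega
  rw [if_neg h1, hz]

lemma pairCost_Od (k : ℕ) : pairCost k (Finset.range (2 * k + 1) \ Ev k) = 1 := by
  rw [pairCost_eq]
  have h1 : 2 * k ∈ Finset.range (2 * k + 1) \ Ev k := by
    rw [Finset.mem_sdiff, mem_Ev]
    refine ⟨Finset.mem_range.mpr (by omega), ?_⟩
    rintro ⟨j, hj, e⟩; omega
  have hz : (∑ j ∈ Finset.range k, (if 2 * j ∈ Finset.range (2 * k + 1) \ Ev k ∧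
      2 * j + 1 ∈ Finset.range (2 * k + 1) \ Ev k then 1 else 0)) = 0 := by
    apply Finset.sum_eq_zero
    intro j hj
    rw [if_neg]
    rintro ⟨h, _⟩
    exact (Finset.mem_sdiff.mp h).2 (mem_Ev.mpr ⟨j, Finset.mem_range.mp hj, rfl⟩)
  rw [if_pos h1, hz]

lemma alloc_Ev (k : ℕ) : IsAlloc k ![Ev k, Finset.range (2 * k + 1) \ Ev k] := by
  constructor
  · show Disjoint (Ev k) (Finset.range (2 * k + 1) \ Ev k)
    exact Finset.disjoint_sdiff
  · show Ev k ∪ (Finset.range (2 * k + 1) \ Ev k) = _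
    exact Finset.union_sdiff_of_subset (Ev_subset k)

lemma alloc_Od (k : ℕ) : IsAlloc k ![Finset.range (2 * k + 1) \ Ev k, Ev k] := by
  constructor
  · show Disjoint (Finset.range (2 * k + 1) \ Ev k) (Ev k)
    exact Finset.disjoint_sdiff.symm
  · show (Finset.range (2 * k + 1) \ Ev k) ∪ Ev k = _
    exact Finset.sdiff_union_of_subset (Ev_subset k)

lemma pareto_profile (k : ℕ) (A : Fin 2 → Finset ℕ) (hA : IsAlloc k A) (hP : ParetoEff k A) :
    (pairCost k (A 0) = 0 ∧ pairCost k (A 1) = 1) ∨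
    (pairCost k (A 0) = 1 ∧ pairCost k (A 1) = 0) := by
  have h2k : 2 * k ∈ A 0 ∪ A 1 := hA.2 ▸ Finset.mem_range.mpr (by omega)
  have hpos : 1 ≤ pairCost k (A 0) + pairCost k (A 1) := by
    rcases Finset.mem_union.mp h2k with h | h
    · have : 1 ≤ pairCost k (A 0) := by rw [pairCost, if_pos h]; omega
      omega
    · have : 1 ≤ pairCost k (A 1) := by rw [pairCost, if_pos h]; omega
      omega
  by_contra hcon
  push_neg at hcon
  set c0 := pairCost k (A 0) with hc0
  set c1 := pairCost k (A 1) with hc1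
  have hcase : (1 ≤ c1 ∧ (1 ≤ c0 ∨ 2 ≤ c1)) ∨ (1 ≤ c0 ∧ (1 ≤ c1 ∨ 2 ≤ c0)) := by omega
  rcases hcase with ⟨hle, hstr⟩ | ⟨hle, hstr⟩
  · refine hP ⟨![Ev k, Finset.range (2 * k + 1) \ Ev k], alloc_Ev k, ?_, ?_⟩
    · intro i
      fin_cases i
      · show pairCost k (Ev k) ≤ c0
        rw [pairCost_Ev]; omega
      · show pairCost k (Finset.range (2 * k + 1) \ Ev k) ≤ c1
        rw [pairCost_Od]; omega
    · rcases hstr with h | h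
      · refine ⟨0, ?_⟩
        show pairCost k (Ev k) < c0
        rw [pairCost_Ev]; omega
      · refine ⟨1, ?_⟩
        show pairCost k (Finset.range (2 * k + 1) \ Ev k) < c1
        rw [pairCost_Od]; omega
  · refine hP ⟨![Finset.range (2 * k + 1) \ Ev k, Ev k], alloc_Od k, ?_, ?_⟩
    · intro i
      fin_cases i
      · show pairCost k (Finset.range (2 * k + 1) \ Ev k) ≤ c0
        rw [pairCost_Od]; omega
      · show pairCost k (Ev k) ≤ c1
        rw [pairCost_Ev]; omega
    · rcases hstr with h | h
      · refine ⟨1, ?_⟩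
        show pairCost k (Ev k) < c1
        rw [pairCost_Ev]; omega
      · refine ⟨0, ?_⟩
        show pairCost k (Finset.range (2 * k + 1) \ Ev k) < c0
        rw [pairCost_Od]; omega

lemma contra_case (k : ℕ) (β : ℝ) (hβ0 : 0 < β) (i j : Fin 2) (hij : i ≠ j)
    (A : Fin 2 → Finset ℕ) (hA : IsAlloc k A)
    (hi : pairCost k (A i) = 1) (hj : pairCost k (A j) = 0) (hE : BetaEFkX β k A) : False := by
  have hunion : A i ∪ A j = Finset.range (2 * k + 1) := by
    fin_cases i <;> fin_cases j <;>
      first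
        | exact absurd rfl hij
        | exact hA.2
        | rw [Finset.union_comm]; exact hA.2
  have hdisj : Disjoint (A i) (A j) := by
    fin_cases i <;> fin_cases j <;>
      first
        | exact absurd rfl hij
        | exact hA.1
        | exact hA.1.symm
  have h2kj : 2 * k ∉ A j := by
    intro h; rw [pairCost, if_pos h] at hj; omega
  have h2ki : 2 * k ∈ A i := by
    have hm : 2 * k ∈ A i ∪ A j := hunion ▸ Finset.mem_range.mpr (by omega)
    rcases Finset.mem_union.mp hm with h | h
    · exact h
    · exact absurd h h2kj
  have hnopair : ∀ m, m < k → ¬(2 * m ∈ A j ∧ 2 * m + 1 ∈ A j) := by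
    intro m hm hmem
    have hmm : m ∈ (Finset.range k).filter (fun j' => 2 * j' ∈ A j ∧ 2 * j' + 1 ∈ A j) :=
      Finset.mem_filter.mpr ⟨Finset.mem_range.mpr hm, hmem⟩
    rw [pairCost] at hj
    have hc : ((Finset.range k).filter (fun j' => 2 * j' ∈ A j ∧ 2 * j' + 1 ∈ A j)).card = 0 := by
      omega
    rw [Finset.card_eq_zero] at hc
    rw [hc] at hmm
    exact absurd hmm (Finset.notMem_empty m)
  have hxrange : ∀ x ∈ A j, x < 2 * k := by
    intro x hx
    have hxr : x ∈ Finset.range (2 * k + 1) := hunion ▸ Finset.mem_union_right _ hx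
    have hxlt := Finset.mem_range.mp hxr
    have hne : x ≠ 2 * k := fun e => h2kj (e ▸ hx)
    omega
  have hcardj : (A j).card ≤ k := by
    have hle : (A j).card ≤ (Finset.range k).card := by
      apply Finset.card_le_card_of_injOn (fun x => x / 2)
      · intro x hx
        have := hxrange x hx
        exact Finset.mem_range.mpr (by dsimp only; omega)
      · intro x hx y hy hxy
        by_contra hne
        simp only at hxy
        have hm : 2 * (x / 2) ∈ A j ∧ 2 * (x / 2) + 1 ∈ A j := by
          rcases (show x = 2 * (x / 2) ∧ y = 2 * (x / 2) + 1 ∨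
              y = 2 * (x / 2) ∧ x = 2 * (x / 2) + 1 by omega) with ⟨e1, e2⟩ | ⟨e1, e2⟩
          · exact ⟨e1 ▸ hx, e2 ▸ hy⟩
          · exact ⟨e1 ▸ hy, e2 ▸ hx⟩
        have hlt : x / 2 < k := by
          have := hxrange x hx
          omega
        exact hnopair _ hlt hm
    simpa using hle
  have hcards : (A i).card + (A j).card = 2 * k + 1 := by
    rw [← Finset.card_union_of_disjoint hdisj, hunion, Finset.card_range]
  obtain ⟨T, hTsub, hTcard⟩ := Finset.exists_subset_card_eq
    (show k ≤ ((A i).erase (2 * k)).card by rw [Finset.card_erase_of_mem h2ki]; omega)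
  have hTsub' : T ⊆ A i := hTsub.trans (Finset.erase_subset _ _)
  have h2knT : 2 * k ∉ T := fun h => (Finset.mem_erase.mp (hTsub h)).1 rfl
  have hrem : 1 ≤ pairCost k (A i \ T) := by
    have hm : 2 * k ∈ A i \ T := Finset.mem_sdiff.mpr ⟨h2ki, h2knT⟩
    rw [pairCost, if_pos hm]; omega
  have hE' := hE i j (by omega) T hTsub' hTcard
  rw [hj] at hE'
  have h1 : (1 : ℝ) ≤ (pairCost k (A i \ T) : ℝ) := by exact_mod_cast hrem
  push_cast at hE'
  nlinarith

end EFkXAux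

/-- for every `k ≥ 1` and `β ∈ (0,1]`, in the instance with `2k+1` chores
and two agents with the identical binary supermodular cost `pairCost k`, every Pareto
efficient complete allocation has cost profile `(0,1)` or `(1,0)`, and no complete
allocation is both Pareto efficient and `β`-EFkX. -/
theorem no_pareto_efficient_beta_EFkX (k : ℕ) (hk : 1 ≤ k) (β : ℝ) (hβ0 : 0 < β)
    (hβ1 : β ≤ 1) :
    (BinaryMarginals (pairCost k) ∧ Supermod (pairCost k)) ∧
    (∀ A : Fin 2 → Finset ℕ, IsAlloc k A → ParetoEff k A →
      (pairCost k (A 0) = 0 ∧ pairCost k (A 1) = 1) ∨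
      (pairCost k (A 0) = 1 ∧ pairCost k (A 1) = 0)) ∧
    (∀ A : Fin 2 → Finset ℕ, IsAlloc k A → ¬ (ParetoEff k A ∧ BetaEFkX β k A)) := by
  refine ⟨⟨EFkXAux.binaryMarginals_pairCost k, EFkXAux.supermod_pairCost k⟩,
    fun A hA hP => EFkXAux.pareto_profile k A hA hP, ?_⟩
  rintro A hA ⟨hP, hE⟩
  rcases EFkXAux.pareto_profile k A hA hP with ⟨h0, h1⟩ | ⟨h0, h1⟩
  · exact EFkXAux.contra_case k β hβ0 1 0 (by decide) A hA h1 h0 hE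
  · exact EFkXAux.contra_case k β hβ0 0 1 (by decide) A hA h0 h1 hE
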